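/- arXiv:2503.16187 — 4 statements merged into one kernel-verified Lean document; each statement's English description precedes it below -/
import Mathlib

section
/- Let m ≥ 1, let V ⊆ ℝᵐ be open, and let ρ : V × V → ℝ satisfy ρ(y, z) = ρ(z, y) ≥ 0 and ρ(y, y) = 0 for all y, z ∈ V, and suppose the map (y, z) ↦ ρ(y, z)² is C² on V × V. Then for every C¹ path γ : (−δ, δ) → V, one has lim_{t→0} ρ(γ(t), γ(0))²/t² = (1/2)·D²F(γ(0))[γ′(0), γ′(0)], where F : V → ℝ is the function F(z) = ρ(z, γ(0))² and D²F(γ(0)) is its second (Fréchet) derivative at γ(0); note DF(γ(0)) = 0 since F attains its minimum 0 at the interior point γ(0). -/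
open Set Filter Topology

set_option maxHeartbeats 1000000 in
/-- Second-order Taylor estimate at an interior local minimum with value `0`:
if `F` is `C²` at `x0`, `F x0 = 0` and `F ≥ 0` near `x0`, then
`F (x0 + v) = ½ D²F(x0)[v,v] + o(‖v‖²)`. -/
private lemma taylor2_min_aux {E : Type*} [NormedAddCommGroup E] [NormedSpace ℝ E]
    {F : E → ℝ} {x0 : E} (hF : ContDiffAt ℝ 2 F x0)
    (hF0 : F x0 = 0) (hmin : ∀ᶠ z in 𝓝 x0, F x0 ≤ F z) :
    ∀ ε > 0, ∀ᶠ v in 𝓝 (0 : E),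
      |F (x0 + v) - (1/2) * fderiv ℝ (fderiv ℝ F) x0 v v| ≤ ε * ‖v‖ ^ 2 := by
  set f' : E → (E →L[ℝ] ℝ) := fderiv ℝ F with hf'
  set B : E →L[ℝ] E →L[ℝ] ℝ := fderiv ℝ f' x0 with hB
  have hBsymm : ∀ v w : E, B v w = B w v := fun v w =>
    (hF.isSymmSndFDerivAt (by simp)).eq v w
  -- the first derivative vanishes at the local minimum
  have hf'0 : f' x0 = 0 := (IsLocalMin.fderiv_eq_zero hmin : _)
  -- f' is differentiable at x0 with derivative B
  have hf'B : HasFDerivAt f' B x0 :=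
    ((hF.fderiv_right (m := 1) le_rfl).differentiableAt one_ne_zero).hasFDerivAt
  -- F is differentiable near x0
  have hFd : ∀ᶠ y in 𝓝 x0, HasFDerivAt F (f' y) y := by
    filter_upwards [hF.eventually (by norm_num)] with y hy
    exact (hy.differentiableAt two_ne_zero).hasFDerivAt
  intro ε hε
  have hlo := hasFDerivAt_iff_isLittleO_nhds_zero.mp hf'B
  have hloε : ∀ᶠ h in 𝓝 (0 : E), ‖f' (x0 + h) - f' x0 - B h‖ ≤ ε * ‖h‖ :=
    hlo.def hε
  -- choose a ball where both facts hold
  obtain ⟨r, hr, hball⟩ : ∃ r > 0, ∀ h : E, ‖h‖ < r →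
      HasFDerivAt F (f' (x0 + h)) (x0 + h) ∧ ‖f' (x0 + h) - B h‖ ≤ ε * ‖h‖ := by
    have h1 : ∀ᶠ h in 𝓝 (0 : E), HasFDerivAt F (f' (x0 + h)) (x0 + h) := by
      have : Tendsto (fun h : E => x0 + h) (𝓝 0) (𝓝 x0) := by
        exact (continuous_const.add continuous_id).tendsto' (0 : E) x0 (by simp)
      exact this.eventually hFd
    obtain ⟨s, hs, hsub⟩ := (h1.and hloε).exists_mem
    obtain ⟨r, hr, hball⟩ := Metric.mem_nhds_iff.mp hs
    refine ⟨r, hr, fun h hh => ?_⟩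
    have hhs : h ∈ s := hball (by simpa [Metric.mem_ball] using hh)
    obtain ⟨ha, hb⟩ := hsub h hhs
    exact ⟨ha, by simpa [hf'0] using hb⟩
  have key : ∀ v : E, ‖v‖ < r →
      |F (x0 + v) - (1/2) * B v v| ≤ ε * ‖v‖ ^ 2 := by
    intro v hv
    -- the auxiliary function and its derivative
    set G : E → ℝ := fun z => F z - (1/2) * B (z - x0) (z - x0) with hG
    set G' : E → (E →L[ℝ] ℝ) := fun z => f' z - B (z - x0) with hG'
    have hbil : IsBoundedBilinearMap ℝ (fun p : E × E => B p.1 p.2) :=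
      B.isBoundedBilinearMap
    have hGd : ∀ y : E, ‖y - x0‖ < r → HasFDerivAt G (G' y) y := by
      intro y hy
      have h1 : HasFDerivAt F (f' y) y := by
        have := (hball (y - x0) hy).1
        simpa using this
      have h2 : HasFDerivAt (fun z : E => (z - x0, z - x0))
          ((ContinuousLinearMap.id ℝ E).prod (ContinuousLinearMap.id ℝ E)) y :=
        ((hasFDerivAt_id y).sub_const x0).prodMk ((hasFDerivAt_id y).sub_const x0)
      have h3 : HasFDerivAt (fun z : E => B (z - x0) (z - x0))
          ((hbil.deriv (y - x0, y - x0)).comp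
            ((ContinuousLinearMap.id ℝ E).prod (ContinuousLinearMap.id ℝ E))) y :=
        by have := (hbil.hasFDerivAt (y - x0, y - x0)).comp y h2; exact this
      have h4 := h1.sub (h3.const_mul (1/2 : ℝ))
      refine h4.congr_fderiv ?_
      ext w
      simp only [hG', ContinuousLinearMap.coe_sub', Pi.sub_apply,
        ContinuousLinearMap.coe_comp', Function.comp_apply,
        ContinuousLinearMap.smul_apply, ContinuousLinearMap.prod_apply,
        ContinuousLinearMap.coe_id', id_eq, hbil.deriv_apply]
      rw [hBsymm w (y - x0)]
      simp only [smul_eq_mul]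
      ring
    -- points of the segment are within distance ‖v‖ of x0
    have hseg : ∀ y ∈ segment ℝ x0 (x0 + v), ‖y - x0‖ ≤ ‖v‖ := by
      intro y hy
      rw [segment_eq_image'] at hy
      obtain ⟨t, ht, rfl⟩ := hy
      simp only [add_sub_cancel_left]
      rw [norm_smul]
      calc ‖t‖ * ‖v‖ ≤ 1 * ‖v‖ := by
            apply mul_le_mul_of_nonneg_right _ (norm_nonneg v)
            rw [Real.norm_eq_abs, abs_le]; constructor <;> linarith [ht.1, ht.2]
        _ = ‖v‖ := one_mul _
    -- mean value inequality on the segment from x0 to x0 + v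
    have hmvt := (convex_segment x0 (x0 + v)).norm_image_sub_le_of_norm_hasFDerivWithin_le
      (f := G) (f' := G') (C := ε * ‖v‖)
      (fun y hy => (hGd y (lt_of_le_of_lt (hseg y hy) hv)).hasFDerivWithinAt)
      (fun y hy => by
        have h1 : ‖f' (x0 + (y - x0)) - B (y - x0)‖ ≤ ε * ‖y - x0‖ :=
          (hball (y - x0) (lt_of_le_of_lt (hseg y hy) hv)).2
        have h2 : ‖G' y‖ ≤ ε * ‖y - x0‖ := by simpa [hG'] using h1
        exact h2.trans (by nlinarith [hseg y hy, norm_nonneg (y - x0)]))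
      (left_mem_segment ℝ x0 (x0 + v)) (right_mem_segment ℝ x0 (x0 + v))
    have hGx0 : G x0 = 0 := by simp [hG, hF0]
    have hfinal : ‖G (x0 + v)‖ ≤ ε * ‖v‖ * ‖v‖ := by
      rw [hGx0, sub_zero, add_sub_cancel_left] at hmvt
      exact hmvt
    have hGval : G (x0 + v) = F (x0 + v) - (1/2) * B v v := by
      simp only [hG, add_sub_cancel_left]
    calc |F (x0 + v) - (1/2) * B v v| = ‖G (x0 + v)‖ := by
          rw [hGval, Real.norm_eq_abs]
      _ ≤ ε * ‖v‖ * ‖v‖ := hfinal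
      _ = ε * ‖v‖ ^ 2 := by ring
  filter_upwards [Metric.ball_mem_nhds (0 : E) hr] with v hv
  exact key v (by simpa [Metric.mem_ball] using hv)

set_option maxHeartbeats 1000000 in
/-- If `ρ` is a symmetric nonnegative function vanishing on the diagonal of an open set
`V ⊆ ℝᵐ` whose square is `C²` on `V × V`, then along any `C¹` path `γ : (-δ, δ) → V`,
`ρ(γ t, γ 0)² / t²` converges, as `t → 0`, to half the second Fréchet derivative of
`z ↦ ρ(z, γ 0)²` at `γ 0` evaluated at `(γ'(0), γ'(0))`. -/
theorem sq_dist_div_sq_tendsto_half_second_derivative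
    (m : ℕ) (hm : 1 ≤ m) (V : Set (EuclideanSpace ℝ (Fin m))) (hV : IsOpen V)
    (ρ : EuclideanSpace ℝ (Fin m) → EuclideanSpace ℝ (Fin m) → ℝ)
    (hρ_symm : ∀ y ∈ V, ∀ z ∈ V, ρ y z = ρ z y)
    (hρ_nonneg : ∀ y ∈ V, ∀ z ∈ V, 0 ≤ ρ y z)
    (hρ_diag : ∀ y ∈ V, ρ y y = 0)
    (hC2 : ContDiffOn ℝ 2
      (fun p : EuclideanSpace ℝ (Fin m) × EuclideanSpace ℝ (Fin m) => (ρ p.1 p.2) ^ 2)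
      (V ×ˢ V))
    (δ : ℝ) (hδ : 0 < δ) (γ : ℝ → EuclideanSpace ℝ (Fin m))
    (hγ : ContDiffOn ℝ 1 γ (Ioo (-δ) δ))
    (hγV : ∀ s ∈ Ioo (-δ) δ, γ s ∈ V) :
    Tendsto (fun s : ℝ => (ρ (γ s) (γ 0)) ^ 2 / s ^ 2) (𝓝[≠] (0 : ℝ))
      (𝓝 ((1 / 2) *
        fderiv ℝ (fderiv ℝ (fun z => (ρ z (γ 0)) ^ 2)) (γ 0) (deriv γ 0) (deriv γ 0))) := by
  have h0mem : (0 : ℝ) ∈ Ioo (-δ) δ := ⟨by linarith, hδ⟩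
  set x0 : EuclideanSpace ℝ (Fin m) := γ 0 with hx0def
  have hx0V : x0 ∈ V := hγV 0 h0mem
  set F : EuclideanSpace ℝ (Fin m) → ℝ := fun z => (ρ z x0) ^ 2 with hFdef
  -- F is C² at x0
  have hF : ContDiffAt ℝ 2 F x0 := by
    have h1 : ContDiffAt ℝ 2
        (fun p : EuclideanSpace ℝ (Fin m) × EuclideanSpace ℝ (Fin m) => (ρ p.1 p.2) ^ 2)
        (x0, x0) := hC2.contDiffAt ((hV.prod hV).mem_nhds ⟨hx0V, hx0V⟩)
    have h2 : ContDiffAt ℝ 2 (fun z : EuclideanSpace ℝ (Fin m) => (z, x0)) x0 :=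
      contDiffAt_id.prodMk contDiffAt_const
    have h3 : ContDiffAt ℝ 2
        ((fun p : EuclideanSpace ℝ (Fin m) × EuclideanSpace ℝ (Fin m) => (ρ p.1 p.2) ^ 2)
          ∘ (fun z => (z, x0))) x0 :=
      ContDiffAt.comp (g := fun p : EuclideanSpace ℝ (Fin m) × EuclideanSpace ℝ (Fin m) =>
        (ρ p.1 p.2) ^ 2) (f := fun z => (z, x0)) x0 h1 h2
    exact h3
  have hF0 : F x0 = 0 := by simp [hFdef, hρ_diag x0 hx0V]
  have hmin : ∀ᶠ z in 𝓝 x0, F x0 ≤ F z := by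
    filter_upwards with z
    rw [hF0]; exact sq_nonneg _
  set B : EuclideanSpace ℝ (Fin m) →L[ℝ] EuclideanSpace ℝ (Fin m) →L[ℝ] ℝ :=
    fderiv ℝ (fderiv ℝ F) x0 with hBdef
  have htaylor := taylor2_min_aux hF hF0 hmin
  -- the derivative of γ at 0
  set v0 : EuclideanSpace ℝ (Fin m) := deriv γ 0 with hv0
  have hγ0 : HasDerivAt γ v0 0 :=
    ((hγ.contDiffAt (isOpen_Ioo.mem_nhds h0mem)).differentiableAt one_ne_zero).hasDerivAt
  have hw : Tendsto (fun s : ℝ => s⁻¹ • (γ s - x0)) (𝓝[≠] (0 : ℝ)) (𝓝 v0) := by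
    have h := hasDerivAt_iff_tendsto_slope.mp hγ0
    exact h.congr fun s => by rw [slope_def_module, sub_zero]
  set w : ℝ → EuclideanSpace ℝ (Fin m) := fun s => s⁻¹ • (γ s - x0) with hwdef
  -- identity: for s ≠ 0
  have hident : ∀ s : ℝ, s ≠ 0 →
      (1/2) * B (w s) (w s) = (1/2) * B (γ s - x0) (γ s - x0) / s ^ 2 := by
    intro s hs
    have hws : (B (w s)) (w s) = s⁻¹ * (s⁻¹ * (B (γ s - x0)) (γ s - x0)) := by
      simp only [hwdef, map_smul, ContinuousLinearMap.smul_apply, smul_eq_mul]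
    rw [hws]
    generalize (B (γ s - x0)) (γ s - x0) = X
    rw [eq_div_iff (pow_ne_zero 2 hs), pow_two]
    field_simp
  -- the main part converges
  have hmain : Tendsto (fun s : ℝ => (1/2) * B (w s) (w s)) (𝓝[≠] (0 : ℝ))
      (𝓝 ((1/2) * B v0 v0)) := by
    have hcont : Continuous fun v : EuclideanSpace ℝ (Fin m) => (1/2) * B v v := by
      have hc : Continuous fun v : EuclideanSpace ℝ (Fin m) => B v v :=
        B.isBoundedBilinearMap.continuous.comp (continuous_id.prodMk continuous_id)
      exact continuous_const.mul hc
    exact (hcont.tendsto v0).comp hw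
  -- the error part converges to 0
  have herr : Tendsto (fun s : ℝ =>
      (F (γ s) - (1/2) * B (γ s - x0) (γ s - x0)) / s ^ 2) (𝓝[≠] (0 : ℝ)) (𝓝 0) := by
    rw [NormedAddCommGroup.tendsto_nhds_zero]
    intro ε hε
    set C : ℝ := ‖v0‖ + 1 with hC
    have hCpos : 0 < C := by positivity
    set ε' : ℝ := ε / (2 * C ^ 2) with hε'
    have hε'pos : 0 < ε' := by positivity
    have h1 : ∀ᶠ s in 𝓝[≠] (0 : ℝ), ‖w s‖ < C :=
      (hw.norm).eventually (eventually_lt_nhds (by simp [hC] : ‖v0‖ < C))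
    have hγcont : Tendsto (fun s : ℝ => γ s - x0) (𝓝[≠] (0 : ℝ)) (𝓝 0) := by
      have h : Tendsto γ (𝓝[≠] (0 : ℝ)) (𝓝 x0) :=
        (hγ0.continuousAt.tendsto).mono_left nhdsWithin_le_nhds
      simpa using h.sub (tendsto_const_nhds (α := ℝ) (x := x0))
    have h2 : ∀ᶠ s in 𝓝[≠] (0 : ℝ),
        |F (x0 + (γ s - x0)) - (1/2) * B (γ s - x0) (γ s - x0)| ≤ ε' * ‖γ s - x0‖ ^ 2 :=
      hγcont.eventually (htaylor ε' hε'pos)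
    filter_upwards [h1, h2, self_mem_nhdsWithin] with s hws hEs hs
    have hs' : (s : ℝ) ≠ 0 := hs
    have hnorm : ‖γ s - x0‖ ^ 2 = s ^ 2 * ‖w s‖ ^ 2 := by
      have hv : γ s - x0 = s • w s := by
        simp [hwdef, smul_smul, hs']
      rw [hv, norm_smul]
      simp [mul_pow, Real.norm_eq_abs, sq_abs]
    have hsimp : x0 + (γ s - x0) = γ s := by abel
    rw [hsimp] at hEs
    have hbound : |F (γ s) - (1/2) * B (γ s - x0) (γ s - x0)| ≤ ε' * s ^ 2 * ‖w s‖ ^ 2 := by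
      rw [hnorm] at hEs; linarith [hEs]
    have hs2pos : (0:ℝ) < s ^ 2 := by positivity
    have hle : ‖(F (γ s) - (1/2) * B (γ s - x0) (γ s - x0)) / s ^ 2‖
        ≤ ε' * ‖w s‖ ^ 2 := by
      rw [Real.norm_eq_abs, abs_div, abs_of_pos hs2pos, div_le_iff₀ hs2pos]
      calc |F (γ s) - (1/2) * B (γ s - x0) (γ s - x0)| ≤ ε' * s ^ 2 * ‖w s‖ ^ 2 := hbound
        _ = ε' * ‖w s‖ ^ 2 * s ^ 2 := by ring
    refine lt_of_le_of_lt hle ?_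
    have hwC : ‖w s‖ ^ 2 ≤ C ^ 2 := by nlinarith [norm_nonneg (w s)]
    calc ε' * ‖w s‖ ^ 2 ≤ ε' * C ^ 2 := by nlinarith
      _ = ε / 2 := by rw [hε', div_mul_eq_mul_div, mul_div_mul_right _ _ (pow_ne_zero 2 hCpos.ne')]
      _ < ε := by linarith
  -- combine
  have heq : (fun s : ℝ => (ρ (γ s) x0) ^ 2 / s ^ 2) =ᶠ[𝓝[≠] (0 : ℝ)]
      (fun s : ℝ => (1/2) * B (w s) (w s)
        + (F (γ s) - (1/2) * B (γ s - x0) (γ s - x0)) / s ^ 2) := by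
    filter_upwards [self_mem_nhdsWithin] with s hs
    have hs' : (s : ℝ) ≠ 0 := hs
    rw [hident s hs']
    have hFs : F (γ s) = (ρ (γ s) x0) ^ 2 := rfl
    field_simp [hFs]
    ring
  have hfin := (hmain.add herr).congr' heq.symm
  rw [add_zero] at hfin
  exact hfin
end

section
/- Let m ≥ 1, let V ⊆ ℝᵐ be open and convex, and let ρ : V × V → ℝ satisfy: ρ(y, z) ≥ 0, ρ(y, y) = 0, ρ(y, z) = ρ(z, y), and ρ(x, z) ≤ ρ(x, y) + ρ(y, z) for all x, y, z ∈ V; suppose moreover that (y, z) ↦ ρ(y, z)² is C² on V × V. For x ∈ V define the quadratic form Q_x(v) := (1/2)·D²(z ↦ ρ(z, x)²)(x)[v, v]. Then for every δ > 0 and every C¹ path γ : [0, δ] → V, ρ(γ(0), γ(δ)) ≤ ∫₀^δ √(Q_{γ(t)}(γ′(t))) dt. -/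
open Set Filter Topology

lemma my_sqrt_add_le (a b : ℝ) (hb : 0 ≤ b) :
    Real.sqrt (a + b) ≤ Real.sqrt a + Real.sqrt b := by
  rcases le_or_gt 0 a with ha | ha
  · have h1 : a + b ≤ (Real.sqrt a + Real.sqrt b) ^ 2 := by
      rw [add_sq]
      nlinarith [Real.sq_sqrt ha, Real.sq_sqrt hb, Real.sqrt_nonneg a, Real.sqrt_nonneg b]
    calc Real.sqrt (a + b) ≤ Real.sqrt ((Real.sqrt a + Real.sqrt b) ^ 2) :=
          Real.sqrt_le_sqrt h1
      _ = Real.sqrt a + Real.sqrt b :=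
          Real.sqrt_sq (by positivity)
  · have : a + b ≤ b := by linarith
    calc Real.sqrt (a + b) ≤ Real.sqrt b := Real.sqrt_le_sqrt this
      _ ≤ Real.sqrt a + Real.sqrt b := le_add_of_nonneg_left (Real.sqrt_nonneg a)

lemma taylor2_bound {E : Type*} [NormedAddCommGroup E] [NormedSpace ℝ E]
    {h : E → ℝ} {U : Set E} (hU : IsOpen U) {x : E} (hx : x ∈ U)
    (hh : ContDiffOn ℝ 2 h U) (h0 : h x = 0) (h1 : fderiv ℝ h x = 0)
    {ε : ℝ} (hε : 0 < ε) :
    ∃ r > 0, ∀ w : E, ‖w‖ < r →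
      h (x + w) ≤ (1 / 2) * fderiv ℝ (fderiv ℝ h) x w w + ε * ‖w‖ ^ 2 := by
  set B := fderiv ℝ (fderiv ℝ h) x with hBdef
  have hdiff : DifferentiableOn ℝ h U := hh.differentiableOn two_ne_zero
  have hdAt : ∀ y ∈ U, DifferentiableAt ℝ h y := fun y hy =>
    (hdiff y hy).differentiableAt (hU.mem_nhds hy)
  have hf' : ContDiffOn ℝ 1 (fderiv ℝ h) U := hh.fderiv_of_isOpen hU (by norm_num)
  have hd2 : DifferentiableAt ℝ (fderiv ℝ h) x :=
    ((hf'.differentiableOn one_ne_zero) x hx).differentiableAt (hU.mem_nhds hx)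
  have hBsymm : ∀ u v : E, B u v = B v u := by
    intro u v
    exact second_derivative_symmetric_of_eventually
      (eventually_of_mem (hU.mem_nhds hx) fun y hy => (hdAt y hy).hasFDerivAt)
      hd2.hasFDerivAt u v
  -- derivative of the translated function
  have htrans : ∀ u : E, HasFDerivAt (fun w : E => x + w) (ContinuousLinearMap.id ℝ E) u :=
    fun u => (hasFDerivAt_id u).const_add x
  have hhw : ∀ u : E, x + u ∈ U → HasFDerivAt (fun w => h (x + w)) (fderiv ℝ h (x + u)) u := by
    intro u hu
    have := ((hdAt _ hu).hasFDerivAt).comp u (htrans u)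
    simpa [Function.comp_def] using this
  -- derivative of the quadratic form
  have hb : IsBoundedBilinearMap ℝ (fun p : E × E => B p.1 p.2) :=
    B.isBoundedBilinearMap
  have hQ : ∀ u : E, HasFDerivAt (fun w : E => (1 / 2) * B w w) (B u) u := by
    intro u
    have hdiag : HasFDerivAt (fun w : E => ((w, w) : E × E))
        ((ContinuousLinearMap.id ℝ E).prod (ContinuousLinearMap.id ℝ E)) u :=
      (hasFDerivAt_id u).prodMk (hasFDerivAt_id u)
    have h2 : HasFDerivAt (fun w : E => B w w)
        ((hb.deriv (u, u)).comp
          ((ContinuousLinearMap.id ℝ E).prod (ContinuousLinearMap.id ℝ E))) u :=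
      HasFDerivAt.comp (g := fun p : E × E => B p.1 p.2)
        (f := fun w : E => ((w, w) : E × E)) u (hb.hasFDerivAt (u, u)) hdiag
    have h3 := h2.const_mul (1 / 2 : ℝ)
    refine h3.congr_fderiv ?_
    ext v
    simp [hb.deriv_apply, hBsymm u v]
    ring
  set ψ : E → (E →L[ℝ] ℝ) := fun w => fderiv ℝ h (x + w) - B w with hψdef
  have hψ0 : ψ 0 = 0 := by simp [hψdef, h1]
  have hψd : HasFDerivAt ψ (0 : E →L[ℝ] E →L[ℝ] ℝ) 0 := by
    have p1 : HasFDerivAt (fun w : E => fderiv ℝ h (x + w)) B 0 := by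
      have hd2' : HasFDerivAt (fderiv ℝ h) B (x + 0) := by
        simpa using hd2.hasFDerivAt
      have := hd2'.comp (0 : E) (htrans 0)
      simpa [Function.comp_def] using this
    have p2 : HasFDerivAt (fun w : E => B w) B 0 := B.hasFDerivAt
    have := p1.sub p2
    rw [sub_self] at this
    exact this
  -- littleO bound on ψ
  have hlo : (fun w : E => ψ w) =o[𝓝 0] fun w : E => w := by
    have := hasFDerivAt_iff_isLittleO_nhds_zero.1 hψd
    simpa [hψ0] using this
  have hloB := hlo.def hε
  have hUmem : ∀ᶠ w : E in 𝓝 0, x + w ∈ U := by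
    have hc : Continuous (fun w : E => x + w) := continuous_const.add continuous_id
    have : Filter.Tendsto (fun w : E => x + w) (𝓝 0) (𝓝 x) := by
      simpa using hc.tendsto 0
    exact this.eventually_mem (hU.mem_nhds hx)
  rcases Metric.eventually_nhds_iff_ball.1 (hloB.and hUmem) with ⟨r, hrpos, hr⟩
  refine ⟨r, hrpos, fun w hw => ?_⟩
  have hballmem : ∀ u : E, ‖u‖ ≤ ‖w‖ → u ∈ Metric.ball (0 : E) r := by
    intro u hu
    simp only [Metric.mem_ball, dist_zero_right]
    exact lt_of_le_of_lt hu hw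
  set s : Set E := Metric.closedBall (0 : E) ‖w‖ with hsdef
  have hssub : s ⊆ Metric.ball (0 : E) r := fun u hu =>
    hballmem u (by simpa [hsdef, dist_zero_right] using hu)
  set φ : E → ℝ := fun w => h (x + w) - (1 / 2) * B w w with hφdef
  have hφd : ∀ u ∈ s, HasFDerivWithinAt φ (ψ u) s u := by
    intro u hu
    have hxu : x + u ∈ U := (hr u (hssub hu)).2
    exact ((hhw u hxu).sub (hQ u)).hasFDerivWithinAt
  have hbound : ∀ u ∈ s, ‖ψ u‖ ≤ ε * ‖w‖ := by
    intro u hu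
    have h1' : ‖ψ u‖ ≤ ε * ‖u‖ := (hr u (hssub hu)).1
    have h2' : ‖u‖ ≤ ‖w‖ := by simpa [hsdef, dist_zero_right] using hu
    exact h1'.trans (by nlinarith)
  have hw0 : (0 : E) ∈ s := by simp [hsdef]
  have hww : w ∈ s := by simp [hsdef]
  have := (convex_closedBall (0 : E) ‖w‖).norm_image_sub_le_of_norm_hasFDerivWithin_le
    hφd hbound hw0 hww
  have hφ0 : φ 0 = 0 := by simp [hφdef, h0]
  rw [hφ0, sub_zero, sub_zero] at this
  have habs : |φ w| ≤ ε * ‖w‖ ^ 2 := by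
    calc |φ w| = ‖φ w‖ := (Real.norm_eq_abs (φ w)).symm
      _ ≤ ε * ‖w‖ * ‖w‖ := this
      _ = ε * ‖w‖ ^ 2 := by ring
  have := (abs_le.1 habs).2
  simp only [hφdef] at this
  linarith

set_option maxHeartbeats 1600000 in
/-- For a pseudometric-like function `ρ` on an open convex `V ⊆ ℝᵐ` whose square is `C²`
on `V × V`, with `Q_x(v) := (1/2) D²(z ↦ ρ(z,x)²)(x)[v,v]`, the `ρ`-distance between the
endpoints of any `C¹` path in `V` is bounded by the `Q`-length of the path. -/
theorem dist_le_length_of_half_hessian_metric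
    (m : ℕ) (hm : 1 ≤ m) (V : Set (EuclideanSpace ℝ (Fin m)))
    (hV : IsOpen V) (hVconv : Convex ℝ V)
    (ρ : EuclideanSpace ℝ (Fin m) → EuclideanSpace ℝ (Fin m) → ℝ)
    (hρ_nonneg : ∀ y ∈ V, ∀ z ∈ V, 0 ≤ ρ y z)
    (hρ_diag : ∀ y ∈ V, ρ y y = 0)
    (hρ_symm : ∀ y ∈ V, ∀ z ∈ V, ρ y z = ρ z y)
    (hρ_triangle : ∀ x ∈ V, ∀ y ∈ V, ∀ z ∈ V, ρ x z ≤ ρ x y + ρ y z)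
    (hC2 : ContDiffOn ℝ 2
      (fun p : EuclideanSpace ℝ (Fin m) × EuclideanSpace ℝ (Fin m) => (ρ p.1 p.2) ^ 2)
      (V ×ˢ V))
    (δ : ℝ) (hδ : 0 < δ) (γ : ℝ → EuclideanSpace ℝ (Fin m))
    (hγ : ContDiffOn ℝ 1 γ (Icc 0 δ))
    (hγV : ∀ s ∈ Icc (0 : ℝ) δ, γ s ∈ V) :
    ρ (γ 0) (γ δ) ≤ ∫ s in (0 : ℝ)..δ, Real.sqrt ((1 / 2) *
      fderiv ℝ (fderiv ℝ (fun z => (ρ z (γ s)) ^ 2)) (γ s)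
        (derivWithin γ (Icc 0 δ) s) (derivWithin γ (Icc 0 δ) s)) := by
  set G : EuclideanSpace ℝ (Fin m) × EuclideanSpace ℝ (Fin m) → ℝ := fun p => (ρ p.1 p.2) ^ 2 with hGdef
  have hVV : IsOpen (V ×ˢ V) := hV.prod hV
  have hGdiffAt : ∀ p ∈ V ×ˢ V, DifferentiableAt ℝ G p := fun p hp =>
    ((hC2.differentiableOn two_ne_zero) p hp).differentiableAt (hVV.mem_nhds hp)
  have hF1 : ContDiffOn ℝ 1 (fderiv ℝ G) (V ×ˢ V) := hC2.fderiv_of_isOpen hVV (by norm_num)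
  have hF1diffAt : ∀ p ∈ V ×ˢ V, DifferentiableAt ℝ (fderiv ℝ G) p := fun p hp =>
    ((hF1.differentiableOn one_ne_zero) p hp).differentiableAt (hVV.mem_nhds hp)
  have hHcont : ContinuousOn (fderiv ℝ (fderiv ℝ G)) (V ×ˢ V) :=
    hF1.continuousOn_fderiv_of_isOpen hVV le_rfl
  set ι : EuclideanSpace ℝ (Fin m) →L[ℝ] EuclideanSpace ℝ (Fin m) × EuclideanSpace ℝ (Fin m) := ContinuousLinearMap.inl ℝ (EuclideanSpace ℝ (Fin m)) (EuclideanSpace ℝ (Fin m)) with hιdef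
  -- slice regularity
  have hslice : ∀ x ∈ V, ContDiffOn ℝ 2 (fun z : EuclideanSpace ℝ (Fin m) => (ρ z x) ^ 2) V := by
    intro x hx
    exact hC2.comp ((contDiff_id.prodMk contDiff_const).contDiffOn)
      (fun z hz => mk_mem_prod hz hx)
  -- first derivative of slice vanishes on the diagonal
  have hsliceDiffAt : ∀ x ∈ V, ∀ z ∈ V, DifferentiableAt ℝ (fun z' : EuclideanSpace ℝ (Fin m) => (ρ z' x) ^ 2) z := by
    intro x hx z hz
    exact (((hslice x hx).differentiableOn two_ne_zero) z hz).differentiableAt (hV.mem_nhds hz)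
  have hfderiv0 : ∀ x ∈ V, fderiv ℝ (fun z : EuclideanSpace ℝ (Fin m) => (ρ z x) ^ 2) x = 0 := by
    intro x hx
    have hmin : IsLocalMin (fun z : EuclideanSpace ℝ (Fin m) => (ρ z x) ^ 2) x := by
      apply eventually_of_mem (hV.mem_nhds hx)
      intro z hz
      show (ρ x x) ^ 2 ≤ (ρ z x) ^ 2
      rw [hρ_diag x hx]
      simpa using sq_nonneg (ρ z x)
    exact hmin.fderiv_eq_zero
  -- step A: first partial derivative identity
  have hincl : ∀ x : EuclideanSpace ℝ (Fin m), ∀ z : EuclideanSpace ℝ (Fin m), HasFDerivAt (fun z' : EuclideanSpace ℝ (Fin m) => ((z', x) : EuclideanSpace ℝ (Fin m) × EuclideanSpace ℝ (Fin m))) ι z := by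
    intro x z
    have h1 : HasFDerivAt (fun z' : EuclideanSpace ℝ (Fin m) => z')
        (ContinuousLinearMap.id ℝ (EuclideanSpace ℝ (Fin m))) z := hasFDerivAt_id z
    have h2 : HasFDerivAt (fun _ : EuclideanSpace ℝ (Fin m) => x)
        (0 : EuclideanSpace ℝ (Fin m) →L[ℝ] EuclideanSpace ℝ (Fin m)) z := hasFDerivAt_const x z
    have := h1.prodMk h2
    exact this
  have stepA : ∀ x ∈ V, ∀ z ∈ V,
      fderiv ℝ (fun z' : EuclideanSpace ℝ (Fin m) => (ρ z' x) ^ 2) z = (fderiv ℝ G (z, x)).comp ι := by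
    intro x hx z hz
    have : HasFDerivAt (fun z' : EuclideanSpace ℝ (Fin m) => (ρ z' x) ^ 2) ((fderiv ℝ G (z, x)).comp ι) z :=
      HasFDerivAt.comp (g := G) (f := fun z' : EuclideanSpace ℝ (Fin m) => ((z', x) : EuclideanSpace ℝ (Fin m) × EuclideanSpace ℝ (Fin m))) z
        ((hGdiffAt (z, x) (mk_mem_prod hz hx)).hasFDerivAt) (hincl x z)
    exact this.fderiv
  -- step B: second partial derivative identity (applied form)
  have stepB : ∀ x ∈ V, ∀ z ∈ V, ∀ u v : EuclideanSpace ℝ (Fin m),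
      fderiv ℝ (fderiv ℝ (fun z' : EuclideanSpace ℝ (Fin m) => (ρ z' x) ^ 2)) z u v
        = fderiv ℝ (fderiv ℝ G) (z, x) (u, 0) (v, 0) := by
    intro x hx z hz u v
    set Φ : ((EuclideanSpace ℝ (Fin m) × EuclideanSpace ℝ (Fin m)) →L[ℝ] ℝ) →L[ℝ] (EuclideanSpace ℝ (Fin m) →L[ℝ] ℝ) :=
      (ContinuousLinearMap.compL ℝ (EuclideanSpace ℝ (Fin m)) (EuclideanSpace ℝ (Fin m) × EuclideanSpace ℝ (Fin m)) ℝ).flip ι with hΦdef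
    have hev : (fun z' : EuclideanSpace ℝ (Fin m) => fderiv ℝ (fun z'' : EuclideanSpace ℝ (Fin m) => (ρ z'' x) ^ 2) z')
        =ᶠ[𝓝 z] fun z' : EuclideanSpace ℝ (Fin m) => Φ (fderiv ℝ G (z', x)) :=
      eventually_of_mem (hV.mem_nhds hz) fun z' hz' => stepA x hx z' hz'
    have hinner : HasFDerivAt (fun z' : EuclideanSpace ℝ (Fin m) => fderiv ℝ G (z', x))
        ((fderiv ℝ (fderiv ℝ G) (z, x)).comp ι) z :=
      HasFDerivAt.comp (g := fderiv ℝ G) (f := fun z' : EuclideanSpace ℝ (Fin m) => ((z', x) : EuclideanSpace ℝ (Fin m) × EuclideanSpace ℝ (Fin m))) z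
        ((hF1diffAt (z, x) (mk_mem_prod hz hx)).hasFDerivAt) (hincl x z)
    have houter : HasFDerivAt (fun z' : EuclideanSpace ℝ (Fin m) => Φ (fderiv ℝ G (z', x)))
        (Φ.comp ((fderiv ℝ (fderiv ℝ G) (z, x)).comp ι)) z :=
      HasFDerivAt.comp (g := fun L => Φ L) (f := fun z' : EuclideanSpace ℝ (Fin m) => fderiv ℝ G (z', x)) z
        (Φ.hasFDerivAt) hinner
    rw [hev.fderiv_eq, houter.fderiv]
    simp [hΦdef, hιdef, ContinuousLinearMap.compL_apply, ContinuousLinearMap.flip_apply]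
  -- the integrand
  set g : ℝ → ℝ := fun s => Real.sqrt ((1 / 2) *
      fderiv ℝ (fderiv ℝ (fun z => (ρ z (γ s)) ^ 2)) (γ s)
        (derivWithin γ (Icc 0 δ) s) (derivWithin γ (Icc 0 δ) s)) with hgdef
  have hγcont : ContinuousOn γ (Icc 0 δ) := hγ.continuousOn
  have hγ'cont : ContinuousOn (derivWithin γ (Icc 0 δ)) (Icc 0 δ) :=
    hγ.continuousOn_derivWithin (uniqueDiffOn_Icc hδ) le_rfl
  have hgcont : ContinuousOn g (Icc 0 δ) := by
    have hpair : ContinuousOn (fun s : ℝ => ((γ s, γ s) : EuclideanSpace ℝ (Fin m) × EuclideanSpace ℝ (Fin m))) (Icc 0 δ) :=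
      hγcont.prodMk hγcont
    have hHs : ContinuousOn (fun s : ℝ => fderiv ℝ (fderiv ℝ G) (γ s, γ s)) (Icc 0 δ) :=
      hHcont.comp hpair (fun s hs => mk_mem_prod (hγV s hs) (hγV s hs))
    have hvpair : ContinuousOn (fun s : ℝ => ((derivWithin γ (Icc 0 δ) s, 0) : EuclideanSpace ℝ (Fin m) × EuclideanSpace ℝ (Fin m)))
        (Icc 0 δ) := hγ'cont.prodMk continuousOn_const
    have hval : ContinuousOn (fun s : ℝ =>
        fderiv ℝ (fderiv ℝ G) (γ s, γ s) (derivWithin γ (Icc 0 δ) s, 0)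
          (derivWithin γ (Icc 0 δ) s, 0)) (Icc 0 δ) :=
      (hHs.clm_apply hvpair).clm_apply hvpair
    have : ContinuousOn (fun s : ℝ => Real.sqrt ((1 / 2) *
        fderiv ℝ (fderiv ℝ G) (γ s, γ s) (derivWithin γ (Icc 0 δ) s, 0)
          (derivWithin γ (Icc 0 δ) s, 0))) (Icc 0 δ) :=
      Real.continuous_sqrt.comp_continuousOn (continuousOn_const.mul hval)
    apply this.congr
    intro s hs
    rw [hgdef]
    simp only
    rw [stepB (γ s) (hγV s hs) (γ s) (hγV s hs)]
  -- extend the integrand continuously to ℝ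
  set gbar : ℝ → ℝ := fun t => g (Set.projIcc 0 δ hδ.le t) with hgbardef
  have hgbarcont : Continuous gbar :=
    hgcont.comp_continuous (continuous_subtype_val.comp continuous_projIcc)
      (fun t => (Set.projIcc 0 δ hδ.le t).2)
  have hgbarg : ∀ s ∈ Icc (0 : ℝ) δ, gbar s = g s := by
    intro s hs
    rw [hgbardef]
    simp only [Set.projIcc_of_mem hδ.le hs]
  -- the primitive
  set Bfun : ℝ → ℝ := fun t => ∫ s in (0 : ℝ)..t, gbar s with hBfundef
  have hBd : ∀ t : ℝ, HasDerivAt Bfun (gbar t) t := fun t =>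
    (hgbarcont.integral_hasStrictDerivAt 0 t).hasDerivAt
  -- the distance function
  set f : ℝ → ℝ := fun t => ρ (γ 0) (γ t) with hfdef
  have h0mem : (0 : ℝ) ∈ Icc (0 : ℝ) δ := ⟨le_rfl, hδ.le⟩
  have hδmem : δ ∈ Icc (0 : ℝ) δ := ⟨hδ.le, le_rfl⟩
  have hfcont : ContinuousOn f (Icc 0 δ) := by
    have hGc : ContinuousOn (fun t : ℝ => G (γ 0, γ t)) (Icc 0 δ) :=
      hC2.continuousOn.comp (continuousOn_const.prodMk hγcont)
        (fun t ht => mk_mem_prod (hγV 0 h0mem) (hγV t ht))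
    have : ContinuousOn (fun t : ℝ => Real.sqrt (G (γ 0, γ t))) (Icc 0 δ) :=
      Real.continuous_sqrt.comp_continuousOn hGc
    apply this.congr
    intro t ht
    rw [hfdef]
    simp only [hGdef]
    rw [Real.sqrt_sq (hρ_nonneg (γ 0) (hγV 0 h0mem) (γ t) (hγV t ht))]
  -- the key slope bound
  have hbound : ∀ t ∈ Ico (0 : ℝ) δ, ∀ r, gbar t < r →
      ∃ᶠ z in 𝓝[>] t, slope f t z < r := by
    intro t htIco r hr
    have htIcc : t ∈ Icc (0 : ℝ) δ := Ico_subset_Icc_self htIco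
    have htlt : t < δ := htIco.2
    have hxV : γ t ∈ V := hγV t htIcc
    set v := derivWithin γ (Icc 0 δ) t with hvdef
    rw [hgbarg t htIcc] at hr
    set Bx := fderiv ℝ (fderiv ℝ (fun z => (ρ z (γ t)) ^ 2)) (γ t) with hBxdef
    have hgt2 : g t = Real.sqrt ((1 / 2) * Bx v v) := rfl
    have hd : 0 < r - g t := sub_pos.2 hr
    set ε := ((r - g t) / (2 * (‖v‖ + 1))) ^ 2 with hεdef
    have hεpos : 0 < ε := pow_pos (div_pos hd (by positivity)) 2
    have hsqrtε : Real.sqrt ε = (r - g t) / (2 * (‖v‖ + 1)) :=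
      Real.sqrt_sq (le_of_lt (div_pos hd (by positivity)))
    obtain ⟨r₀, hr₀pos, htay⟩ := taylor2_bound hV hxV (hslice (γ t) hxV)
      (by show (ρ (γ t) (γ t)) ^ 2 = 0; rw [hρ_diag (γ t) hxV]; norm_num)
      (hfderiv0 (γ t) hxV) hεpos
    have hfilter : 𝓝[>] t ≤ 𝓝[Icc 0 δ \ {t}] t := by
      rw [← nhdsWithin_Ioc_eq_nhdsGT htlt]
      apply nhdsWithin_mono
      intro z hz
      exact ⟨⟨le_trans htIcc.1 hz.1.le, hz.2⟩, ne_of_gt hz.1⟩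
    have hslopeγ : Tendsto (slope γ t) (𝓝[>] t) (𝓝 v) := by
      have hdγ : HasDerivWithinAt γ v (Icc 0 δ) t :=
        ((hγ.differentiableOn one_ne_zero) t htIcc).hasDerivWithinAt
      exact (hasDerivWithinAt_iff_tendsto_slope.1 hdγ).mono_left hfilter
    have c0 : Continuous (fun u : EuclideanSpace ℝ (Fin m) => Bx u u) :=
      (Bx.isBoundedBilinearMap.continuous).comp (continuous_id.prodMk continuous_id)
    have hcexpr : Continuous (fun u : EuclideanSpace ℝ (Fin m) =>
        Real.sqrt ((1 / 2) * Bx u u) + Real.sqrt ε * ‖u‖) :=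
      (Real.continuous_sqrt.comp (continuous_const.mul c0)).add
        (continuous_const.mul continuous_norm)
    have hlim : Tendsto (fun z => Real.sqrt ((1 / 2) * Bx (slope γ t z) (slope γ t z))
        + Real.sqrt ε * ‖slope γ t z‖) (𝓝[>] t)
        (𝓝 (Real.sqrt ((1 / 2) * Bx v v) + Real.sqrt ε * ‖v‖)) :=
      (hcexpr.tendsto v).comp hslopeγ
    have hlt : Real.sqrt ((1 / 2) * Bx v v) + Real.sqrt ε * ‖v‖ < r := by
      rw [← hgt2, hsqrtε]
      have hn : (0 : ℝ) ≤ ‖v‖ := norm_nonneg v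
      have key : (r - g t) / (2 * (‖v‖ + 1)) * ‖v‖ < (r - g t) / 2 := by
        have h2 : (r - g t) * ‖v‖ < (r - g t) * (‖v‖ + 1) :=
          mul_lt_mul_of_pos_left (lt_add_one _) hd
        calc (r - g t) / (2 * (‖v‖ + 1)) * ‖v‖
            = ((r - g t) * ‖v‖) / (2 * (‖v‖ + 1)) := by ring
          _ < ((r - g t) * (‖v‖ + 1)) / (2 * (‖v‖ + 1)) :=
              div_lt_div_of_pos_right h2 (by positivity)
          _ = (r - g t) / 2 := by
              rw [mul_comm (2 : ℝ) (‖v‖ + 1), ← div_div,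
                mul_div_assoc, div_self (by positivity : (‖v‖ + 1 : ℝ) ≠ 0), mul_one]
      linarith
    have hev1 : ∀ᶠ z in 𝓝[>] t,
        Real.sqrt ((1 / 2) * Bx (slope γ t z) (slope γ t z))
          + Real.sqrt ε * ‖slope γ t z‖ < r :=
      hlim.eventually (eventually_lt_nhds hlt) |>.mono (fun z hz => hz)
    have hev2 : ∀ᶠ z in 𝓝[>] t, z ∈ Ioc t δ := Ioc_mem_nhdsGT htlt
    have hev3 : ∀ᶠ z in 𝓝[>] t, ‖γ z - γ t‖ < r₀ := by
      have hγt : Tendsto γ (𝓝[>] t) (𝓝 (γ t)) :=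
        (hγcont t htIcc).mono_left (hfilter.trans (nhdsWithin_mono t diff_subset))
      have hnorm : Tendsto (fun z => ‖γ z - γ t‖) (𝓝[>] t) (𝓝 0) := by
        have h1 : Tendsto (fun z => γ z - γ t) (𝓝[>] t) (𝓝 (γ t - γ t)) :=
          hγt.sub (tendsto_const_nhds (x := γ t))
        have := h1.norm
        simpa using this
      exact hnorm.eventually (eventually_lt_nhds hr₀pos) |>.mono (fun z hz => hz)
    apply ((hev1.and (hev2.and hev3)).mono ?_).frequently
    intro z hz
    obtain ⟨hexpr, hzIoc, hwlt⟩ := hz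
    have hzIcc : z ∈ Icc (0 : ℝ) δ := ⟨le_trans htIcc.1 hzIoc.1.le, hzIoc.2⟩
    have hzt : 0 < z - t := sub_pos.2 hzIoc.1
    set w := γ z - γ t with hwdef
    have hρzt : 0 ≤ ρ (γ z) (γ t) := hρ_nonneg (γ z) (hγV z hzIcc) (γ t) hxV
    have hup : f z - f t ≤ Real.sqrt ((1 / 2) * Bx w w) + Real.sqrt ε * ‖w‖ := by
      have step1 : f z - f t ≤ ρ (γ t) (γ z) := by
        have h3 := hρ_triangle (γ 0) (hγV 0 h0mem) (γ t) hxV (γ z) (hγV z hzIcc)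
        simp only [hfdef]
        linarith
      have step2 : ρ (γ t) (γ z) = Real.sqrt ((ρ (γ z) (γ t)) ^ 2) := by
        rw [Real.sqrt_sq hρzt, hρ_symm (γ t) hxV (γ z) (hγV z hzIcc)]
      have step3 : (ρ (γ z) (γ t)) ^ 2 ≤ (1 / 2) * Bx w w + ε * ‖w‖ ^ 2 := by
        have := htay w hwlt
        simpa [hwdef] using this
      have step4 : Real.sqrt ((ρ (γ z) (γ t)) ^ 2)
          ≤ Real.sqrt ((1 / 2) * Bx w w) + Real.sqrt (ε * ‖w‖ ^ 2) :=
        (Real.sqrt_le_sqrt step3).trans (my_sqrt_add_le _ _ (by positivity))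
      have step5 : Real.sqrt (ε * ‖w‖ ^ 2) = Real.sqrt ε * ‖w‖ := by
        rw [Real.sqrt_mul hεpos.le, Real.sqrt_sq (norm_nonneg w)]
      calc f z - f t ≤ ρ (γ t) (γ z) := step1
        _ = Real.sqrt ((ρ (γ z) (γ t)) ^ 2) := step2
        _ ≤ Real.sqrt ((1 / 2) * Bx w w) + Real.sqrt (ε * ‖w‖ ^ 2) := step4
        _ = Real.sqrt ((1 / 2) * Bx w w) + Real.sqrt ε * ‖w‖ := by rw [step5]
    -- rewrite the limit expression at z
    have hslopeval : slope γ t z = (z - t)⁻¹ • w := slope_def_module γ t z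
    have hcinv : (0 : ℝ) < (z - t)⁻¹ := inv_pos.2 hzt
    have hterm1 : Real.sqrt ((1 / 2) * Bx (slope γ t z) (slope γ t z))
        = (z - t)⁻¹ * Real.sqrt ((1 / 2) * Bx w w) := by
      rw [hslopeval]
      have harg : (1 / 2) * Bx ((z - t)⁻¹ • w) ((z - t)⁻¹ • w)
          = ((z - t)⁻¹) ^ 2 * ((1 / 2) * Bx w w) := by
        simp only [map_smul, ContinuousLinearMap.smul_apply, smul_eq_mul]
        ring
      rw [harg, Real.sqrt_mul (sq_nonneg _), Real.sqrt_sq hcinv.le]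
    have hterm2 : Real.sqrt ε * ‖slope γ t z‖ = (z - t)⁻¹ * (Real.sqrt ε * ‖w‖) := by
      rw [hslopeval, norm_smul, Real.norm_eq_abs, abs_of_pos hcinv]
      ring
    have hslopef : slope f t z = (z - t)⁻¹ * (f z - f t) := by
      rw [slope_def_field]
      ring
    have hle : slope f t z ≤ Real.sqrt ((1 / 2) * Bx (slope γ t z) (slope γ t z))
        + Real.sqrt ε * ‖slope γ t z‖ := by
      rw [hslopef, hterm1, hterm2, ← mul_add]
      exact mul_le_mul_of_nonneg_left hup hcinv.le
    exact lt_of_le_of_lt hle hexpr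
  -- apply the fencing theorem
  have hmain : f δ ≤ Bfun δ := by
    apply image_le_of_liminf_slope_right_le_deriv_boundary hfcont _
      (fun t ht => (hBd t).continuousAt.continuousWithinAt)
      (fun t ht => (hBd t).hasDerivWithinAt) hbound hδmem
    rw [hfdef, hBfundef]
    simp [hρ_diag (γ 0) (hγV 0 h0mem)]
  calc ρ (γ 0) (γ δ) = f δ := rfl
    _ ≤ Bfun δ := hmain
    _ = ∫ s in (0 : ℝ)..δ, g s := by
        apply intervalIntegral.integral_congr
        intro s hs
        exact hgbarg s (by rwa [uIcc_of_le hδ.le] at hs)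
    _ = _ := rfl
end

section
/- Let δ, T > 0 and κ ≥ 0, and let h : ℝ → ℝ be four times continuously differentiable on an open set containing [−δ, T]. Suppose h(0) = 0, h′(0) = 0, h″(0) = 2, h(t) ≤ t² for all t ∈ [−δ, T], and |h⁗(t)| ≤ κ for all t ∈ [−δ, T]. Then h‴(0) = 0, and 0 ≤ t² − h(t) ≤ κ·t⁴/24 for all t ∈ [−δ, T]. -/
open Set

/-- On a uniquely-differentiable subset of an open set where `f` is `C^n`, the iterated
derivative within the subset agrees with the global iterated derivative. -/
lemma aux_iteratedDerivWithin_eq {n : WithTop ℕ∞} {f : ℝ → ℝ} {U s : Set ℝ} (hU : IsOpen U)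
    (hf : ContDiffOn ℝ n f U) (hsU : s ⊆ U) (hs : UniqueDiffOn ℝ s)
    {m : ℕ} (hm : (m : WithTop ℕ∞) ≤ n) {x : ℝ} (hx : x ∈ s) :
    iteratedDerivWithin m f s x = iteratedDeriv m f x := by
  have H : HasFTaylorSeriesUpToOn n f (ftaylorSeriesWithin ℝ f U) U :=
    hf.ftaylorSeriesWithin hU.uniqueDiffOn
  have H2 := (H.mono hsU).eq_iteratedFDerivWithin_of_uniqueDiffOn hm hs hx
  rw [iteratedDerivWithin_eq_iteratedFDerivWithin, ← H2, iteratedDeriv_eq_iteratedFDeriv]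
  have : ftaylorSeriesWithin ℝ f U x m = iteratedFDerivWithin ℝ m f U x := rfl
  rw [this, iteratedFDerivWithin_of_isOpen m hU (hsU hx)]

/-- Third-order Taylor estimate with fourth-derivative bound, on `[0, b]`. -/
lemma aux_taylor3_bound {b κ : ℝ} {f : ℝ → ℝ} {U : Set ℝ} (hU : IsOpen U)
    (hsub : Icc 0 b ⊆ U) (hf : ContDiffOn ℝ 4 f U)
    (f0 : f 0 = 0) (f1 : deriv f 0 = 0) (f2 : iteratedDeriv 2 f 0 = 0)
    (hκ : ∀ t ∈ Icc 0 b, |iteratedDeriv 4 f t| ≤ κ) :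
    ∀ t ∈ Icc 0 b, |f t - iteratedDeriv 3 f 0 * t ^ 3 / 6| ≤ κ * t ^ 4 / 24 := by
  intro t ht
  have h0b : (0 : ℝ) ∈ Icc 0 b := ⟨le_refl 0, le_trans ht.1 ht.2⟩
  rcases eq_or_lt_of_le ht.1 with h0 | h0
  · have hκ0 : 0 ≤ κ := le_trans (abs_nonneg _) (hκ 0 h0b)
    simp [← h0, f0]
  · -- t > 0
    have hIcc : Icc (0 : ℝ) t ⊆ U := fun x hx => hsub ⟨hx.1, le_trans hx.2 ht.2⟩
    have hf3 : ContDiffOn ℝ 3 f (Icc 0 t) :=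
      (hf.of_le (by norm_num)).mono hIcc
    have hf' : DifferentiableOn ℝ (iteratedDerivWithin 3 f (Icc 0 t)) (Ioo 0 t) :=
      ((hf.mono hIcc).differentiableOn_iteratedDerivWithin (by norm_num)
        (uniqueDiffOn_Icc h0)).mono Ioo_subset_Icc_self
    obtain ⟨x', hx', hEq⟩ := taylor_mean_remainder_lagrange (n := 3) h0.ne
      (by rwa [uIcc_of_le h0.le]) (by rwa [uIcc_of_le h0.le, uIoo_of_le h0.le])
    rw [uIcc_of_le h0.le] at hEq
    rw [uIoo_of_le h0.le] at hx'
    have hco : ∀ m : ℕ, m ≤ 4 → ∀ x ∈ Icc 0 t,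
        iteratedDerivWithin m f (Icc 0 t) x = iteratedDeriv m f x := fun m hm x hx =>
      aux_iteratedDerivWithin_eq hU hf hIcc (uniqueDiffOn_Icc h0) (by exact_mod_cast hm) hx
    rw [taylor_within_apply] at hEq
    have hsum : ∑ k ∈ Finset.range 4, ((k.factorial : ℝ)⁻¹ * (t - 0) ^ k) •
        iteratedDerivWithin k f (Icc 0 t) 0 = iteratedDeriv 3 f 0 * t ^ 3 / 6 := by
      rw [Finset.sum_range_succ, Finset.sum_range_succ, Finset.sum_range_succ,
        Finset.sum_range_one]
      rw [hco 0 (by norm_num) 0 ⟨le_refl 0, h0.le⟩, hco 1 (by norm_num) 0 ⟨le_refl 0, h0.le⟩,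
        hco 2 (by norm_num) 0 ⟨le_refl 0, h0.le⟩, hco 3 (by norm_num) 0 ⟨le_refl 0, h0.le⟩]
      rw [iteratedDeriv_zero, iteratedDeriv_one, f0, f1, f2]
      simp [Nat.factorial]
      ring
    rw [hsum, hco 4 (le_refl 4) x' (Ioo_subset_Icc_self hx')] at hEq
    rw [hEq]
    have hb4 : |iteratedDeriv 4 f x'| ≤ κ :=
      hκ x' ⟨(hx'.1).le, le_trans hx'.2.le ht.2⟩
    rw [abs_div, abs_mul]
    have ht4 : |(t - 0) ^ 4| = t ^ 4 := by
      rw [sub_zero, abs_pow, abs_of_nonneg h0.le]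
    rw [ht4]
    have : |(((3 + 1 : ℕ).factorial : ℕ) : ℝ)| = 24 := by norm_num [Nat.factorial]
    rw [this]
    have htp : (0:ℝ) ≤ t ^ 4 := by positivity
    calc |iteratedDeriv 4 f x'| * t ^ 4 / 24 ≤ κ * t ^ 4 / 24 := by
          gcongr
      _ = κ * t ^ 4 / 24 := rfl

lemma aux_deriv_sq : deriv (fun t : ℝ => t ^ 2) = fun t => 2 * t := by
  funext t
  rw [deriv_fun_pow differentiableAt_id]
  norm_num

lemma aux_sq_iteratedDeriv_two : iteratedDeriv 2 (fun t : ℝ => t ^ 2) = fun _ => 2 := by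
  rw [show (2 : ℕ) = 1 + 1 from rfl, iteratedDeriv_succ, iteratedDeriv_one, aux_deriv_sq]
  funext t
  rw [deriv_const_mul _ differentiableAt_id]
  simp

lemma aux_sq_iteratedDeriv_three : iteratedDeriv 3 (fun t : ℝ => t ^ 2) = fun _ => 0 := by
  rw [show (3 : ℕ) = 2 + 1 from rfl, iteratedDeriv_succ, aux_sq_iteratedDeriv_two]
  funext t
  simp

lemma aux_sq_iteratedDeriv_four : iteratedDeriv 4 (fun t : ℝ => t ^ 2) = fun _ => 0 := by
  rw [show (4 : ℕ) = 3 + 1 from rfl, iteratedDeriv_succ, aux_sq_iteratedDeriv_three]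
  funext t
  simp

lemma aux_nonneg_coeff {b κ c : ℝ} (hb : 0 < b) (hκ : 0 ≤ κ) {G : ℝ → ℝ}
    (hG : ∀ t ∈ Icc 0 b, 0 ≤ G t)
    (hBd : ∀ t ∈ Icc 0 b, |G t - c * t ^ 3 / 6| ≤ κ * t ^ 4 / 24) : 0 ≤ c := by
  by_contra hc
  push_neg at hc
  have hκ1 : 0 < κ + 1 := by linarith
  set t := min b (-2 * c / (κ + 1)) with htdef
  have ht0 : 0 < t := lt_min hb (div_pos (by linarith) hκ1)
  have htb : t ∈ Icc 0 b := ⟨ht0.le, min_le_left _ _⟩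
  have htm : t * (κ + 1) ≤ -2 * c := by
    have h' := min_le_right b (-2 * c / (κ + 1))
    calc t * (κ + 1) ≤ -2 * c / (κ + 1) * (κ + 1) :=
          mul_le_mul_of_nonneg_right h' hκ1.le
      _ = -2 * c := by field_simp
  have h1 := (abs_le.1 (hBd t htb)).2
  have h2 := hG t htb
  have h4 : -c * t ^ 3 ≤ κ * t / 4 * t ^ 3 := by nlinarith
  have h5 : -c ≤ κ * t / 4 := le_of_mul_le_mul_right h4 (pow_pos ht0 3)
  nlinarith [mul_le_mul_of_nonneg_left htm hκ, mul_le_mul_of_nonneg_right h5 hκ1.le]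

/-- If `h` is `C⁴` on an open set containing `[-δ, T]`, with `h 0 = 0`, `h' 0 = 0`,
`h'' 0 = 2`, `h t ≤ t²` on `[-δ, T]`, and `|h⁽⁴⁾| ≤ κ` on `[-δ, T]`, then `h''' 0 = 0`
and `0 ≤ t² - h t ≤ κ t⁴ / 24` on `[-δ, T]`. -/
theorem third_deriv_eq_zero_and_fourth_order_bound
    {δ T κ : ℝ} (hδ : 0 < δ) (hT : 0 < T) (hκ : 0 ≤ κ)
    (h : ℝ → ℝ) (U : Set ℝ) (hU : IsOpen U) (hIccU : Icc (-δ) T ⊆ U)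
    (hC4 : ContDiffOn ℝ 4 h U)
    (h0 : h 0 = 0) (h1 : deriv h 0 = 0) (h2 : iteratedDeriv 2 h 0 = 2)
    (hle : ∀ t ∈ Icc (-δ) T, h t ≤ t ^ 2)
    (hbound : ∀ t ∈ Icc (-δ) T, |iteratedDeriv 4 h t| ≤ κ) :
    iteratedDeriv 3 h 0 = 0 ∧
      ∀ t ∈ Icc (-δ) T, 0 ≤ t ^ 2 - h t ∧ t ^ 2 - h t ≤ κ * t ^ 4 / 24 := by
  set q : ℝ → ℝ := fun t => t ^ 2 with hq
  set g : ℝ → ℝ := fun t => t ^ 2 - h t with hg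
  have hqC : ContDiff ℝ 4 q := contDiff_id.pow 2
  have hgeq : g = q - h := rfl
  have hgC4 : ContDiffOn ℝ 4 g U := by
    rw [hgeq]; exact hqC.contDiffOn.sub hC4
  have h0U : (0 : ℝ) ∈ U := hIccU ⟨by linarith, hT.le⟩
  -- iterated derivatives of g split
  have cderiv : ∀ n : ℕ, (n : WithTop ℕ∞) ≤ 4 → ∀ x ∈ U,
      iteratedDeriv n g x = iteratedDeriv n q x - iteratedDeriv n h x := by
    intro n hn x hx
    have e1 : iteratedDerivWithin n g U x = iteratedDeriv n g x :=
      aux_iteratedDerivWithin_eq hU hgC4 subset_rfl hU.uniqueDiffOn hn hx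
    have e2 : iteratedDerivWithin n q U x = iteratedDeriv n q x :=
      aux_iteratedDerivWithin_eq hU hqC.contDiffOn subset_rfl hU.uniqueDiffOn hn hx
    have e3 : iteratedDerivWithin n h U x = iteratedDeriv n h x :=
      aux_iteratedDerivWithin_eq hU hC4 subset_rfl hU.uniqueDiffOn hn hx
    rw [← e1, ← e2, ← e3, hgeq,
      iteratedDerivWithin_sub hx hU.uniqueDiffOn
        (((hqC.contDiffOn).of_le (by exact_mod_cast hn)) x hx) ((hC4.of_le hn) x hx)]
  -- values at 0
  have g0 : g 0 = 0 := by simp [hg, h0]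
  have g1 : deriv g 0 = 0 := by
    have := cderiv 1 (by norm_num) 0 h0U
    simp only [iteratedDeriv_one] at this
    have hdq : deriv q 0 = 0 := by rw [hq, aux_deriv_sq]; norm_num
    rw [this, hdq, h1]
    norm_num
  have g2 : iteratedDeriv 2 g 0 = 0 := by
    rw [cderiv 2 (by norm_num) 0 h0U, hq, aux_sq_iteratedDeriv_two, h2]
    norm_num
  set c : ℝ := iteratedDeriv 3 g 0 with hc
  have hc3 : c = -iteratedDeriv 3 h 0 := by
    rw [hc, cderiv 3 (by norm_num) 0 h0U, hq, aux_sq_iteratedDeriv_three]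
    ring_nf
  have g4 : ∀ t ∈ Icc (-δ) T, |iteratedDeriv 4 g t| ≤ κ := by
    intro t ht
    rw [cderiv 4 le_rfl t (hIccU ht), hq, aux_sq_iteratedDeriv_four]
    simpa using hbound t ht
  have hge : ∀ t ∈ Icc (-δ) T, 0 ≤ g t := fun t ht => sub_nonneg.2 (hle t ht)
  -- positive side
  have hsubT : Icc (0 : ℝ) T ⊆ U := fun x hx => hIccU ⟨by linarith [hx.1], hx.2⟩
  have hmemT : ∀ x ∈ Icc (0 : ℝ) T, x ∈ Icc (-δ) T := fun x hx => ⟨by linarith [hx.1], hx.2⟩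
  have Bound1 : ∀ t ∈ Icc (0 : ℝ) T, |g t - c * t ^ 3 / 6| ≤ κ * t ^ 4 / 24 := by
    intro t ht
    exact aux_taylor3_bound hU hsubT hgC4 g0 g1 g2
      (fun s hs => g4 s (hmemT s hs)) t ht
  -- negative side via reflection
  set G : ℝ → ℝ := fun s => g (-s) with hG
  set V : Set ℝ := Neg.neg ⁻¹' U with hV
  have hVopen : IsOpen V := hU.preimage continuous_neg
  have hsubδ : Icc (0 : ℝ) δ ⊆ V := by
    intro x hx
    exact hIccU ⟨by linarith [hx.2], by linarith [hx.1]⟩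
  have hmemδ : ∀ x ∈ Icc (0 : ℝ) δ, -x ∈ Icc (-δ) T :=
    fun x hx => ⟨by linarith [hx.2], by linarith [hx.1]⟩
  have hGC4 : ContDiffOn ℝ 4 G V :=
    hgC4.comp contDiff_neg.contDiffOn (fun x hx => hx)
  have G0 : G 0 = 0 := by simp [hG, g0]
  have G1 : deriv G 0 = 0 := by
    rw [← iteratedDeriv_one, hG, iteratedDeriv_comp_neg, neg_zero, iteratedDeriv_one, g1]
    simp
  have G2 : iteratedDeriv 2 G 0 = 0 := by
    rw [hG, iteratedDeriv_comp_neg, neg_zero, g2]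
    simp
  have G3 : iteratedDeriv 3 G 0 = -c := by
    rw [hG, iteratedDeriv_comp_neg, neg_zero, ← hc]
    norm_num
  have G4 : ∀ s ∈ Icc (0 : ℝ) δ, |iteratedDeriv 4 G s| ≤ κ := by
    intro s hs
    rw [hG, iteratedDeriv_comp_neg]
    simpa [smul_eq_mul, abs_mul, abs_pow] using g4 (-s) (hmemδ s hs)
  have Bound2 : ∀ s ∈ Icc (0 : ℝ) δ, |G s - (-c) * s ^ 3 / 6| ≤ κ * s ^ 4 / 24 := by
    intro s hs
    have := aux_taylor3_bound hVopen hsubδ hGC4 G0 G1 G2 G4 s hs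
    rwa [G3] at this
  -- the third derivative vanishes
  have hc1 : 0 ≤ c :=
    aux_nonneg_coeff hT hκ (fun t ht => hge t (hmemT t ht)) Bound1
  have hc2 : 0 ≤ -c :=
    aux_nonneg_coeff hδ hκ (fun s hs => hge (-s) (hmemδ s hs)) Bound2
  have hc0 : c = 0 := le_antisymm (by linarith) hc1
  have h3 : iteratedDeriv 3 h 0 = 0 := by
    have := hc3
    rw [hc0] at this
    linarith [this]
  refine ⟨h3, fun t ht => ?_⟩
  have hgt : g t = t ^ 2 - h t := rfl
  refine ⟨hge t ht, ?_⟩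
  rcases le_or_gt 0 t with h0t | h0t
  · have := Bound1 t ⟨h0t, ht.2⟩
    rw [hc0] at this
    simp only [zero_mul, zero_div, sub_zero] at this
    have := (abs_le.1 this).2
    linarith [hgt ▸ this]
  · have hsδ : -t ∈ Icc (0 : ℝ) δ := ⟨by linarith, by linarith [ht.1]⟩
    have hB := Bound2 (-t) hsδ
    rw [hc0] at hB
    simp only [neg_zero, zero_mul, zero_div, sub_zero] at hB
    have h4 : (-t) ^ 4 = t ^ 4 := by ring
    have hGv : G (-t) = g t := by simp [hG]
    rw [hGv, h4] at hB
    have := (abs_le.1 hB).2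
    linarith [hgt ▸ this]
end

section
/- Let (Ω, 𝓕, P) be a probability space, (M, d) a metric space equipped with its Borel σ-algebra, μ a Borel probability measure on M, and X₁, X₂, … : Ω → M independent random variables each with distribution μ. Let f : M → ℝ be bounded and measurable, fix x ∈ M, m ∈ ℕ with m ≥ 1, and α > 0, and set ε_n := 2·n^{−1/(m+2+α)}. Define S_n(ω) := Σ_{j=1}^n k_{ε_n}(x, X_j(ω))·(f(x) − f(X_j(ω))) and a_n := ∫_M k_{ε_n}(x, y)·(f(x) − f(y)) dμ(y), where k_ε(x, y) := exp(−d(x, y)²/(2ε)). Then, P-almost surely, (2/(ε_n·(2π·ε_n)^{m/2})) · | S_n(ω)/n − a_n | → 0 as n → ∞. -/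
open MeasureTheory Filter Topology Real

/-- The Gaussian kernel with bandwidth `ε` built from the metric of `M`. -/
noncomputable def gaussKernel {M : Type*} [MetricSpace M] (ε : ℝ) (x y : M) : ℝ :=
  Real.exp (-(dist x y) ^ 2 / (2 * ε))

/-- The bandwidth sequence `ε_n = 2 n^{-1/(m+2+α)}`. -/
noncomputable def epsSeq (m : ℕ) (α : ℝ) (n : ℕ) : ℝ :=
  2 * (n : ℝ) ^ (-(1 : ℝ) / (m + 2 + α))

namespace GLCAux

open ProbabilityTheory

variable {Ω : Type*} [MeasurableSpace Ω] {P : Measure Ω} [IsProbabilityMeasure P]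

lemma integrable_of_abs_le {Y : Ω → ℝ} (hY : Measurable Y) {B : ℝ} (hB : ∀ ω, |Y ω| ≤ B) :
    Integrable Y P :=
  ⟨hY.aestronglyMeasurable,
    HasFiniteIntegral.of_bounded (C := B) (ae_of_all _ fun ω => by simpa using hB ω)⟩

lemma exp_le_one_add_add_sq {u : ℝ} (hu : |u| ≤ 1) : Real.exp u ≤ 1 + u + u ^ 2 := by
  have h := Real.exp_bound hu (n := 2) (by norm_num)
  simp only [Finset.sum_range_succ, Finset.sum_range_zero] at h
  norm_num [Nat.factorial] at h
  have h2 := (abs_le.1 h).2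
  have h3 : |u| ^ 2 = u ^ 2 := sq_abs u
  nlinarith [sq_nonneg u]

lemma mgf_le_of_bound {Y : Ω → ℝ} (hY : Measurable Y) {B t : ℝ} (hB : 0 ≤ B)
    (hbd : ∀ ω, |Y ω| ≤ B) (h0 : ∫ ω, Y ω ∂P = 0) (ht : |t| * B ≤ 1) :
    mgf Y P t ≤ Real.exp (t ^ 2 * B ^ 2) := by
  have hYint : Integrable Y P := integrable_of_abs_le hY hbd
  have hY2bd : ∀ ω, |(Y ω) ^ 2| ≤ B ^ 2 := fun ω => by
    rw [abs_pow]
    exact pow_le_pow_left₀ (abs_nonneg _) (hbd ω) 2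
  have hY2int : Integrable (fun ω => (Y ω) ^ 2) P :=
    integrable_of_abs_le (hY.pow_const 2) hY2bd
  have htY : ∀ ω, |t * Y ω| ≤ 1 := fun ω => by
    rw [abs_mul]
    exact le_trans (mul_le_mul_of_nonneg_left (hbd ω) (abs_nonneg t)) ht
  have hexpbd : ∀ ω, |Real.exp (t * Y ω)| ≤ Real.exp 1 := fun ω => by
    rw [abs_of_pos (Real.exp_pos _)]
    exact Real.exp_le_exp.2 ((le_abs_self _).trans (htY ω))
  have hexpint : Integrable (fun ω => Real.exp (t * Y ω)) P :=
    integrable_of_abs_le ((hY.const_mul t).exp) hexpbd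
  have hRHSint : Integrable (fun ω => 1 + t * Y ω + (t * Y ω) ^ 2) P := by
    refine Integrable.add (Integrable.add (integrable_const 1) (hYint.const_mul t)) ?_
    have : (fun ω => (t * Y ω) ^ 2) = fun ω => t ^ 2 * (Y ω) ^ 2 := by
      funext ω; ring
    rw [this]
    exact hY2int.const_mul _
  have hY2le : ∫ ω, (Y ω) ^ 2 ∂P ≤ B ^ 2 := by
    calc ∫ ω, (Y ω) ^ 2 ∂P ≤ ∫ _ω, B ^ 2 ∂P :=
          integral_mono hY2int (integrable_const _) (fun ω => (le_abs_self _).trans (hY2bd ω))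
      _ = B ^ 2 := by simp
  calc mgf Y P t = ∫ ω, Real.exp (t * Y ω) ∂P := rfl
    _ ≤ ∫ ω, (1 + t * Y ω + (t * Y ω) ^ 2) ∂P :=
        integral_mono hexpint hRHSint (fun ω => exp_le_one_add_add_sq (htY ω))
    _ = 1 + t * (∫ ω, Y ω ∂P) + t ^ 2 * ∫ ω, (Y ω) ^ 2 ∂P := by
        have hsq : Integrable (fun ω => (t * Y ω) ^ 2) P := by
          have : (fun ω => (t * Y ω) ^ 2) = fun ω => t ^ 2 * (Y ω) ^ 2 := by
            funext ω; ring
          rw [this]; exact hY2int.const_mul _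
        have hint1 : Integrable (fun ω => 1 + t * Y ω) P := by
          exact (integrable_const 1).add (hYint.const_mul t)
        rw [integral_add hint1 hsq, integral_add (integrable_const 1) (hYint.const_mul t),
          integral_const, integral_const_mul]
        have : ∫ ω, (t * Y ω) ^ 2 ∂P = t ^ 2 * ∫ ω, (Y ω) ^ 2 ∂P := by
          simp_rw [mul_pow]
          exact integral_const_mul _ _
        rw [this]
        simp
    _ ≤ 1 + t ^ 2 * B ^ 2 := by
        rw [h0, mul_zero, add_zero]
        have := mul_le_mul_of_nonneg_left hY2le (sq_nonneg t)
        linarith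
    _ ≤ Real.exp (t ^ 2 * B ^ 2) := by
        have := Real.add_one_le_exp (t ^ 2 * B ^ 2)
        linarith


lemma chernoff {Y : ℕ → Ω → ℝ}
    (hindep : iIndepFun Y P) (hmeas : ∀ j, Measurable (Y j))
    {B : ℝ} (hB : 0 < B) (hbd : ∀ j ω, |Y j ω| ≤ B) (h0 : ∀ j, ∫ ω, Y j ω ∂P = 0)
    (n : ℕ) {δ : ℝ} (hδ : 0 < δ) (hδB : δ ≤ 2 * B) :
    (P {ω | (n : ℝ) * δ ≤ ∑ j ∈ Finset.range n, Y j ω}).toReal ≤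
      Real.exp (-((n : ℝ) * δ ^ 2) / (4 * B ^ 2)) := by
  set t : ℝ := δ / (2 * B ^ 2) with ht_def
  have ht0 : 0 < t := div_pos hδ (by positivity)
  have htB : |t| * B ≤ 1 := by
    rw [abs_of_pos ht0, ht_def, div_mul_eq_mul_div, div_le_one (by positivity)]
    nlinarith
  have hint : ∀ j, Integrable (fun ω => Real.exp (t * Y j ω)) P := fun j =>
    integrable_of_abs_le ((hmeas j).const_mul t).exp (B := Real.exp 1) (fun ω => by
      rw [abs_of_pos (Real.exp_pos _)]
      refine Real.exp_le_exp.2 ((le_abs_self _).trans ?_)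
      rw [abs_mul]
      exact le_trans (mul_le_mul_of_nonneg_left (hbd j ω) (abs_nonneg t)) htB)
  have hmgf : ∀ j, mgf (Y j) P t ≤ Real.exp (t ^ 2 * B ^ 2) := fun j =>
    mgf_le_of_bound (hmeas j) hB.le (hbd j) (h0 j) htB
  have hsumeq : (∑ j ∈ Finset.range n, Y j) = fun ω => ∑ j ∈ Finset.range n, Y j ω := by
    funext ω; simp [Finset.sum_apply]
  have hsummeas : Measurable (∑ j ∈ Finset.range n, Y j) := by
    rw [hsumeq]
    exact Finset.measurable_sum (Finset.range n) (fun j _ => hmeas j)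
  have hsumbd : ∀ ω, |(∑ j ∈ Finset.range n, Y j) ω| ≤ (n : ℝ) * B := fun ω => by
    rw [Finset.sum_apply]
    calc |∑ j ∈ Finset.range n, Y j ω| ≤ ∑ j ∈ Finset.range n, |Y j ω| :=
          Finset.abs_sum_le_sum_abs _ _
      _ ≤ ∑ _j ∈ Finset.range n, B := Finset.sum_le_sum (fun j _ => hbd j ω)
      _ = (n : ℝ) * B := by simp [mul_comm]
  have hsumint : Integrable (fun ω => Real.exp (t * (∑ j ∈ Finset.range n, Y j) ω)) P :=
    integrable_of_abs_le (hsummeas.const_mul t).exp (B := Real.exp (t * ((n : ℝ) * B)))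
      (fun ω => by
        rw [abs_of_pos (Real.exp_pos _)]
        refine Real.exp_le_exp.2 ((le_abs_self _).trans ?_)
        rw [abs_mul]
        refine le_trans (mul_le_mul_of_nonneg_left (hsumbd ω) (abs_nonneg t)) ?_
        rw [abs_of_pos ht0])
  have key := measure_ge_le_exp_mul_mgf (μ := P) (X := ∑ j ∈ Finset.range n, Y j)
    ((n : ℝ) * δ) ht0.le hsumint
  rw [hindep.mgf_sum hmeas] at key
  have hprod : ∏ j ∈ Finset.range n, mgf (Y j) P t ≤ Real.exp (t ^ 2 * B ^ 2) ^ n := by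
    calc ∏ j ∈ Finset.range n, mgf (Y j) P t
        ≤ ∏ _j ∈ Finset.range n, Real.exp (t ^ 2 * B ^ 2) :=
          Finset.prod_le_prod (fun j _ => mgf_nonneg) (fun j _ => hmgf j)
      _ = Real.exp (t ^ 2 * B ^ 2) ^ n := by simp
  have hset : {ω | (n : ℝ) * δ ≤ ∑ j ∈ Finset.range n, Y j ω} =
      {ω | (n : ℝ) * δ ≤ (∑ j ∈ Finset.range n, Y j) ω} := by
    simp [Finset.sum_apply]
  rw [hset]
  refine key.trans ?_
  calc Real.exp (-t * ((n : ℝ) * δ)) * ∏ j ∈ Finset.range n, mgf (Y j) P t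
      ≤ Real.exp (-t * ((n : ℝ) * δ)) * Real.exp (t ^ 2 * B ^ 2) ^ n :=
        mul_le_mul_of_nonneg_left hprod (Real.exp_pos _).le
    _ = Real.exp (-((n : ℝ) * δ ^ 2) / (4 * B ^ 2)) := by
        rw [← Real.exp_nat_mul, ← Real.exp_add]
        congr 1
        rw [ht_def]
        field_simp
        ring

lemma chernoff_abs {Y : ℕ → Ω → ℝ}
    (hindep : iIndepFun Y P) (hmeas : ∀ j, Measurable (Y j))
    {B : ℝ} (hB : 0 < B) (hbd : ∀ j ω, |Y j ω| ≤ B) (h0 : ∀ j, ∫ ω, Y j ω ∂P = 0)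
    (n : ℕ) {δ : ℝ} (hδ : 0 < δ) (hδB : δ ≤ 2 * B) :
    P {ω | (n : ℝ) * δ ≤ |∑ j ∈ Finset.range n, Y j ω|} ≤
      ENNReal.ofReal (2 * Real.exp (-((n : ℝ) * δ ^ 2) / (4 * B ^ 2))) := by
  have hneg : iIndepFun (fun j ω => -(Y j ω)) P := by
    exact hindep.comp (fun _ => fun a : ℝ => -a) (fun _ => measurable_neg)
  have h1 : (P {ω | (n : ℝ) * δ ≤ ∑ j ∈ Finset.range n, Y j ω}).toReal ≤
      Real.exp (-((n : ℝ) * δ ^ 2) / (4 * B ^ 2)) :=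
    chernoff hindep hmeas hB hbd h0 n hδ hδB
  have h2 : (P {ω | (n : ℝ) * δ ≤ ∑ j ∈ Finset.range n, -(Y j ω)}).toReal ≤
      Real.exp (-((n : ℝ) * δ ^ 2) / (4 * B ^ 2)) := by
    refine chernoff hneg (fun j => (hmeas j).neg) hB (fun j ω => by simpa using hbd j ω)
      (fun j => by rw [integral_neg, h0 j, neg_zero]) n hδ hδB
  have hsub : {ω | (n : ℝ) * δ ≤ |∑ j ∈ Finset.range n, Y j ω|} ⊆
      {ω | (n : ℝ) * δ ≤ ∑ j ∈ Finset.range n, Y j ω} ∪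
        {ω | (n : ℝ) * δ ≤ ∑ j ∈ Finset.range n, -(Y j ω)} := by
    intro ω hω
    have hω' : (n : ℝ) * δ ≤ |∑ j ∈ Finset.range n, Y j ω| := hω
    rcases le_abs.1 hω' with h | h
    · exact Or.inl h
    · exact Or.inr (by simpa using h)
  have e1 : P {ω | (n : ℝ) * δ ≤ ∑ j ∈ Finset.range n, Y j ω} ≤
      ENNReal.ofReal (Real.exp (-((n : ℝ) * δ ^ 2) / (4 * B ^ 2))) :=
    (ENNReal.le_ofReal_iff_toReal_le (measure_ne_top _ _) (Real.exp_pos _).le).2 h1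
  have e2 : P {ω | (n : ℝ) * δ ≤ ∑ j ∈ Finset.range n, -(Y j ω)} ≤
      ENNReal.ofReal (Real.exp (-((n : ℝ) * δ ^ 2) / (4 * B ^ 2))) :=
    (ENNReal.le_ofReal_iff_toReal_le (measure_ne_top _ _) (Real.exp_pos _).le).2 h2
  calc P {ω | (n : ℝ) * δ ≤ |∑ j ∈ Finset.range n, Y j ω|}
      ≤ P ({ω | (n : ℝ) * δ ≤ ∑ j ∈ Finset.range n, Y j ω} ∪
          {ω | (n : ℝ) * δ ≤ ∑ j ∈ Finset.range n, -(Y j ω)}) := measure_mono hsub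
    _ ≤ P {ω | (n : ℝ) * δ ≤ ∑ j ∈ Finset.range n, Y j ω} +
          P {ω | (n : ℝ) * δ ≤ ∑ j ∈ Finset.range n, -(Y j ω)} := measure_union_le _ _
    _ ≤ ENNReal.ofReal (Real.exp (-((n : ℝ) * δ ^ 2) / (4 * B ^ 2))) +
          ENNReal.ofReal (Real.exp (-((n : ℝ) * δ ^ 2) / (4 * B ^ 2))) := add_le_add e1 e2
    _ = ENNReal.ofReal (2 * Real.exp (-((n : ℝ) * δ ^ 2) / (4 * B ^ 2))) := by
        rw [← ENNReal.ofReal_add (Real.exp_pos _).le (Real.exp_pos _).le]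
        ring_nf

end GLCAux

/-- Concentration half of the pointwise convergence of graph Laplacians: for i.i.d.
samples `X₁, X₂, …` with law `μ` on a metric space and a bounded measurable `f`, the
scaled deviation of the empirical graph-Laplacian sum from its mean tends to `0`
almost surely. -/
theorem graph_laplacian_concentration
    {Ω : Type*} [MeasurableSpace Ω] (P : Measure Ω) [IsProbabilityMeasure P]
    {M : Type*} [MetricSpace M] [MeasurableSpace M] [BorelSpace M]
    (μ : Measure M) [IsProbabilityMeasure μ]
    (X : ℕ → Ω → M) (hXmeas : ∀ j, Measurable (X j))
    (hXindep : ProbabilityTheory.iIndepFun X P)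
    (hXlaw : ∀ j, Measure.map (X j) P = μ)
    (f : M → ℝ) (hfmeas : Measurable f) (C : ℝ) (hfbdd : ∀ y, |f y| ≤ C)
    (x : M) (m : ℕ) (hm : 1 ≤ m) (α : ℝ) (hα : 0 < α) :
    ∀ᵐ ω ∂P, Tendsto (fun n : ℕ =>
        (2 / (epsSeq m α n * (2 * π * epsSeq m α n) ^ ((m : ℝ) / 2))) *
          |(∑ j ∈ Finset.range n,
              gaussKernel (epsSeq m α n) x (X j ω) * (f x - f (X j ω))) / n -
            ∫ y, gaussKernel (epsSeq m α n) x y * (f x - f y) ∂μ|)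
      atTop (𝓝 0) := by
  classical
  have hC0 : 0 ≤ C := (abs_nonneg _).trans (hfbdd x)
  set κ : ℝ := (m : ℝ) + 2 + α with hκdef
  have hκ : 0 < κ := by positivity
  set γ : ℝ := ((m : ℝ) + 2) / (2 * κ) with hγdef
  have hγ0 : 0 < γ := by positivity
  have hγhalf : γ < 1 / 2 := by
    rw [hγdef, div_lt_iff₀ (by positivity)]
    nlinarith
  set β : ℝ := (γ + 1 / 2) / 2 with hβdef
  have hβγ : γ < β := by rw [hβdef]; linarith
  have hβhalf : β < 1 / 2 := by rw [hβdef]; linarith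
  have hβ0 : 0 < β := by rw [hβdef]; linarith
  have hs : 0 < 1 - 2 * β := by linarith
  set B : ℝ := 4 * C + 1 with hBdef
  have hB : 0 < B := by rw [hBdef]; linarith
  set δ : ℕ → ℝ := fun n => (n : ℝ) ^ (-β) with hδdef
  set g : ℕ → M → ℝ := fun n y => gaussKernel (epsSeq m α n) x y * (f x - f y) with hgdef
  have heps_nonneg : ∀ n, 0 ≤ epsSeq m α n := fun n => by
    unfold epsSeq
    positivity
  have hker_pos : ∀ n (y : M), 0 < gaussKernel (epsSeq m α n) x y := fun n y =>
    Real.exp_pos _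
  have hker_le_one : ∀ n (y : M), gaussKernel (epsSeq m α n) x y ≤ 1 := fun n y => by
    unfold gaussKernel
    rw [← Real.exp_zero]
    refine Real.exp_le_exp.2 ?_
    refine div_nonpos_iff.2 (Or.inr ⟨neg_nonpos.2 (sq_nonneg _), by
      have := heps_nonneg n
      linarith⟩)
  have hgmeas : ∀ n, Measurable (g n) := by
    intro n
    have hk : Continuous (fun y : M => gaussKernel (epsSeq m α n) x y) := by
      unfold gaussKernel
      fun_prop
    exact hk.measurable.mul (measurable_const.sub hfmeas)
  have hgbd : ∀ n (y : M), |g n y| ≤ 2 * C := by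
    intro n y
    rw [hgdef]
    simp only
    rw [abs_mul]
    have h1 : |gaussKernel (epsSeq m α n) x y| ≤ 1 := by
      rw [abs_of_pos (hker_pos n y)]; exact hker_le_one n y
    have h2 : |f x - f y| ≤ 2 * C := by
      calc |f x - f y| ≤ |f x| + |f y| := abs_sub _ _
        _ ≤ 2 * C := by have := hfbdd x; have := hfbdd y; linarith
    calc |gaussKernel (epsSeq m α n) x y| * |f x - f y| ≤ 1 * (2 * C) :=
          mul_le_mul h1 h2 (abs_nonneg _) one_pos.le
      _ = 2 * C := one_mul _
  set a : ℕ → ℝ := fun n => ∫ y, g n y ∂μ with hadef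
  have habd : ∀ n, |a n| ≤ 2 * C := by
    intro n
    have := norm_integral_le_of_norm_le_const (μ := μ) (f := g n) (C := 2 * C)
      (ae_of_all _ fun y => by simpa using hgbd n y)
    simpa using this
  -- the centered summands
  have hZmeas : ∀ n j, Measurable (fun ω => g n (X j ω) - a n) := fun n j =>
    ((hgmeas n).comp (hXmeas j)).sub measurable_const
  have hZbd : ∀ n j ω, |g n (X j ω) - a n| ≤ B := by
    intro n j ω
    calc |g n (X j ω) - a n| ≤ |g n (X j ω)| + |a n| := abs_sub _ _
      _ ≤ B := by have := hgbd n (X j ω); have := habd n; rw [hBdef]; linarith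
  have hgXint : ∀ n j, Integrable (fun ω => g n (X j ω)) P := fun n j =>
    GLCAux.integrable_of_abs_le ((hgmeas n).comp (hXmeas j)) (fun ω => hgbd n (X j ω))
  have hZzero : ∀ n j, ∫ ω, (g n (X j ω) - a n) ∂P = 0 := by
    intro n j
    rw [integral_sub (hgXint n j) (integrable_const _), integral_const]
    have hmap : ∫ ω, g n (X j ω) ∂P = ∫ y, g n y ∂μ := by
      rw [← hXlaw j, integral_map (hXmeas j).aemeasurable (hgmeas n).aestronglyMeasurable]
    rw [hmap]
    simp [hadef]
  have hZindep : ∀ n, ProbabilityTheory.iIndepFun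
      (fun j => fun ω => g n (X j ω) - a n) P := by
    intro n
    exact hXindep.comp (fun _ => fun y => g n y - a n)
      (fun _ => (hgmeas n).sub measurable_const)
  -- events
  set A : ℕ → Set Ω := fun n =>
    {ω | (n : ℝ) * δ n ≤ |∑ j ∈ Finset.range n, (g n (X j ω) - a n)|} with hAdef
  have hδpos : ∀ n : ℕ, 1 ≤ n → 0 < δ n := by
    intro n hn
    exact Real.rpow_pos_of_pos (by exact_mod_cast hn) _
  have hδle : ∀ n : ℕ, 1 ≤ n → δ n ≤ 2 * B := by
    intro n hn
    have h1 : δ n ≤ 1 := Real.rpow_le_one_of_one_le_of_nonpos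
      (by exact_mod_cast hn) (neg_nonpos.2 hβ0.le)
    rw [hBdef]; linarith
  have hPA : ∀ n : ℕ, 1 ≤ n →
      P (A n) ≤ ENNReal.ofReal (2 * Real.exp (-((n : ℝ) * (δ n) ^ 2) / (4 * B ^ 2))) := by
    intro n hn
    exact GLCAux.chernoff_abs (hZindep n) (hZmeas n) hB (hZbd n) (hZzero n) n
      (hδpos n hn) (hδle n hn)
  -- summability
  set c : ℝ := 1 / (4 * B ^ 2) with hcdef
  have hc : 0 < c := by rw [hcdef]; positivity
  set b : ℕ → ℝ := fun n =>
    if n = 0 then 1 else 2 * Real.exp (-((n : ℝ) * (δ n) ^ 2) / (4 * B ^ 2)) with hbdef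
  have hb0 : ∀ n, 0 ≤ b n := by
    intro n
    rw [hbdef]
    by_cases h : n = 0 <;> simp [h] <;> positivity
  have hbsum : Summable b := by
    refine summable_of_isBigO_nat
      (Real.summable_nat_rpow.2 (by norm_num : (-2 : ℝ) < -1)) ?_
    rw [Asymptotics.isBigO_iff]
    refine ⟨2, ?_⟩
    have hlog := (isLittleO_log_rpow_atTop hs).def (by positivity : (0:ℝ) < c / 2)
    have hlogn : ∀ᶠ n : ℕ in atTop,
        ‖Real.log (n : ℝ)‖ ≤ c / 2 * ‖(n : ℝ) ^ (1 - 2 * β)‖ :=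
      tendsto_natCast_atTop_atTop.eventually hlog
    filter_upwards [hlogn, eventually_ge_atTop 1] with n hlg hn1
    have hn0 : (0 : ℝ) < n := by exact_mod_cast hn1
    have hn1' : (1 : ℝ) ≤ n := by exact_mod_cast hn1
    have hns : (0 : ℝ) ≤ (n : ℝ) ^ (1 - 2 * β) := Real.rpow_nonneg hn0.le _
    have hlogpos : 0 ≤ Real.log (n : ℝ) := Real.log_nonneg hn1'
    rw [Real.norm_eq_abs, abs_of_nonneg hlogpos, Real.norm_eq_abs, abs_of_nonneg hns] at hlg
    -- key exponent computation : n * (δ n)^2 = n ^ (1 - 2β)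
    have hexp : (n : ℝ) * (δ n) ^ 2 = (n : ℝ) ^ (1 - 2 * β) := by
      have hδn : δ n = (n : ℝ) ^ (-β) := rfl
      rw [hδn, ← Real.rpow_natCast ((n : ℝ) ^ (-β)) 2, ← Real.rpow_mul hn0.le,
        show ((-β) * ((2 : ℕ) : ℝ)) = -(2 * β) by push_cast; ring,
        show (1 - 2 * β) = 1 + -(2 * β) by ring, Real.rpow_add hn0, Real.rpow_one]
    have hb_eq : b n = 2 * Real.exp (-(c * (n : ℝ) ^ (1 - 2 * β))) := by
      rw [hbdef]
      simp only [if_neg (by omega : ¬ n = 0)]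
      rw [hexp, hcdef]
      congr 1
      ring
    have hrpow : ((n : ℝ) ^ (-2 : ℝ)) = Real.exp (Real.log (n : ℝ) * (-2)) :=
      Real.rpow_def_of_pos hn0 _
    have hkey : -(c * (n : ℝ) ^ (1 - 2 * β)) ≤ Real.log (n : ℝ) * (-2) := by
      nlinarith
    rw [Real.norm_eq_abs, abs_of_nonneg (hb0 n), hb_eq, Real.norm_eq_abs,
      abs_of_nonneg (Real.rpow_nonneg hn0.le _), hrpow]
    have := Real.exp_le_exp.2 hkey
    linarith
  have hPb : ∀ n, P (A n) ≤ ENNReal.ofReal (b n) := by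
    intro n
    by_cases h : n = 0
    · subst h
      have hb1 : b 0 = 1 := by rw [hbdef]; simp
      rw [hb1, ENNReal.ofReal_one]
      exact prob_le_one
    · rw [hbdef]
      simp only [if_neg h]
      exact hPA n (by omega)
  have hsumP : (∑' n, P (A n)) ≠ ⊤ := by
    refine ne_top_of_le_ne_top ?_ (ENNReal.tsum_le_tsum hPb)
    rw [← ENNReal.ofReal_tsum_of_nonneg hb0 hbsum]
    exact ENNReal.ofReal_ne_top
  -- Borel–Cantelli
  filter_upwards [ae_eventually_notMem hsumP] with ω hω
  -- the scaling factor
  set r : ℕ → ℝ := fun n =>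
    2 / (epsSeq m α n * (2 * π * epsSeq m α n) ^ ((m : ℝ) / 2)) with hrdef
  have hr_nonneg : ∀ n, 0 ≤ r n := by
    intro n
    rw [hrdef]
    have h1 : (0:ℝ) ≤ epsSeq m α n := heps_nonneg n
    have h2 : (0:ℝ) ≤ (2 * π * epsSeq m α n) ^ ((m : ℝ) / 2) :=
      Real.rpow_nonneg (by positivity) _
    positivity
  -- closed form for r n * δ n
  have hrδ : ∀ n : ℕ, 1 ≤ n →
      r n * δ n = (4 * π) ^ (-((m : ℝ) / 2)) * (n : ℝ) ^ (γ - β) := by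
    intro n hn
    have hn0 : (0 : ℝ) < n := by exact_mod_cast hn
    set u : ℝ := (n : ℝ) ^ (-(1 : ℝ) / κ) with hudef
    have hu : 0 < u := Real.rpow_pos_of_pos hn0 _
    have heps : epsSeq m α n = 2 * u := by rw [hudef]; rfl
    have h4π : 2 * π * epsSeq m α n = 4 * π * u := by rw [heps]; ring
    have hsplit : (4 * π * u) ^ ((m : ℝ) / 2) =
        (4 * π) ^ ((m : ℝ) / 2) * u ^ ((m : ℝ) / 2) :=
      Real.mul_rpow (by positivity) hu.le
    have hupow : u * u ^ ((m : ℝ) / 2) = u ^ (1 + (m : ℝ) / 2) := by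
      rw [Real.rpow_add hu, Real.rpow_one]
    have hP4 : (0:ℝ) < (4 * π) ^ ((m : ℝ) / 2) := Real.rpow_pos_of_pos (by positivity) _
    have hr_eq : r n = (4 * π) ^ (-((m : ℝ) / 2)) * u ^ (-(1 + (m : ℝ) / 2)) := by
      rw [hrdef]
      simp only
      rw [h4π, heps, hsplit, Real.rpow_neg (by positivity : (0:ℝ) ≤ 4 * π),
        Real.rpow_neg hu.le]
      rw [← hupow]
      field_simp
    have huN : u ^ (-(1 + (m : ℝ) / 2)) = (n : ℝ) ^ ((-(1 : ℝ) / κ) * (-(1 + (m : ℝ) / 2))) := by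
      rw [hudef, ← Real.rpow_mul hn0.le]
    have hδn : δ n = (n : ℝ) ^ (-β) := by rw [hδdef]
    rw [hr_eq, huN, hδn, mul_assoc, ← Real.rpow_add hn0]
    congr 2
    rw [hγdef]
    ring
  have hT : Tendsto (fun n : ℕ => r n * δ n) atTop (𝓝 0) := by
    have h1 : Tendsto (fun n : ℕ => (n : ℝ) ^ (γ - β)) atTop (𝓝 0) := by
      have := (tendsto_rpow_neg_atTop (by linarith : (0:ℝ) < β - γ)).comp
        tendsto_natCast_atTop_atTop
      have heq : (fun n : ℕ => ((n : ℝ) ^ (-(β - γ)))) = fun n : ℕ => (n : ℝ) ^ (γ - β) := by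
        funext n; congr 1; ring
      exact heq ▸ this
    have h2 : Tendsto (fun n : ℕ => (4 * π) ^ (-((m : ℝ) / 2)) * (n : ℝ) ^ (γ - β))
        atTop (𝓝 0) := by
      have := h1.const_mul ((4 * π) ^ (-((m : ℝ) / 2)))
      simpa using this
    refine h2.congr' ?_
    filter_upwards [eventually_ge_atTop 1] with n hn
    exact (hrδ n hn).symm
  -- squeeze
  refine tendsto_of_tendsto_of_tendsto_of_le_of_le' tendsto_const_nhds hT ?_ ?_
  · exact Eventually.of_forall fun n => mul_nonneg (hr_nonneg n) (abs_nonneg _)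
  · filter_upwards [hω, eventually_ge_atTop 1] with n hn hn1
    have hn0 : (0 : ℝ) < n := by exact_mod_cast hn1
    have hnA : ¬ ((n : ℝ) * δ n ≤ |∑ j ∈ Finset.range n, (g n (X j ω) - a n)|) := hn
    push_neg at hnA
    have hsplit : (∑ j ∈ Finset.range n, g n (X j ω)) / (n : ℝ) - a n =
        (∑ j ∈ Finset.range n, (g n (X j ω) - a n)) / (n : ℝ) := by
      rw [Finset.sum_sub_distrib, Finset.sum_const, Finset.card_range, nsmul_eq_mul]
      field_simp
    have habs : |(∑ j ∈ Finset.range n, g n (X j ω)) / (n : ℝ) - a n| ≤ δ n := by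
      rw [hsplit, abs_div, abs_of_pos hn0]
      rw [div_le_iff₀ hn0]
      calc |∑ j ∈ Finset.range n, (g n (X j ω) - a n)| ≤ (n : ℝ) * δ n := hnA.le
        _ = δ n * n := by ring
    calc r n * |(∑ j ∈ Finset.range n,
            gaussKernel (epsSeq m α n) x (X j ω) * (f x - f (X j ω))) / (n : ℝ) -
            ∫ y, gaussKernel (epsSeq m α n) x y * (f x - f y) ∂μ|
        = r n * |(∑ j ∈ Finset.range n, g n (X j ω)) / (n : ℝ) - a n| := rfl
      _ ≤ r n * δ n := mul_le_mul_of_nonneg_left habs (hr_nonneg n)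
end
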